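/- Let G be the group of order p^{2r+1}·2^n described in the context and let H be the subgroup generated by P and b. Then the commutator subgroup of H equals the subgroup generated by x, y₁z₁, y₂z₂, …, y_rz_r. -/

import Mathlib

namespace Paper

/-- The data of the group `G = P ⋊ D_{2^n}` of order `p^{2r+1}·2^n`: an odd prime
`p ≡ 1 (mod 4)`, `r ≥ 1`, `n ≥ 3` with `2^{n-1}` the exact power of `2` dividing
`p - 1`, an integer `k` of multiplicative order `2^{n-1}` modulo `p` with inverse `q`
modulo `p`, and generators `x, y₁, …, y_r, z₁, …, z_r, a, b` of `G` subject to the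
listed relations (commutator convention `[u,v] = u⁻¹v⁻¹uv`). -/
structure GData (G : Type*) [Group G] [Fintype G] where
  p : ℕ
  r : ℕ
  n : ℕ
  k : ℕ
  q : ℕ
  x : G
  y : Fin r → G
  z : Fin r → G
  a : G
  b : G
  hp : p.Prime
  hp4 : p % 4 = 1
  hr : 1 ≤ r
  hn : 3 ≤ n
  hdvd : 2 ^ (n - 1) ∣ p - 1
  hndvd : ¬ 2 ^ n ∣ p - 1
  hordk : orderOf ((k : ZMod p)) = 2 ^ (n - 1)
  hkq : ((k : ZMod p)) * (q : ZMod p) = 1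
  hcard : Fintype.card G = p ^ (2 * r + 1) * 2 ^ n
  hgen : Subgroup.closure (({x, a, b} : Set G) ∪ Set.range y ∪ Set.range z) = ⊤
  hxp : x ^ p = 1
  hyp : ∀ i, y i ^ p = 1
  hzp : ∀ i, z i ^ p = 1
  han : a ^ 2 ^ (n - 1) = 1
  hb2 : b ^ 2 = 1
  hxy : ∀ i, x⁻¹ * (y i)⁻¹ * x * y i = 1
  hxz : ∀ i, x⁻¹ * (z i)⁻¹ * x * z i = 1
  hyy : ∀ i j, (y i)⁻¹ * (y j)⁻¹ * y i * y j = 1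
  hzz : ∀ i j, (z i)⁻¹ * (z j)⁻¹ * z i * z j = 1
  hyz : ∀ i, (y i)⁻¹ * (z i)⁻¹ * y i * z i = x
  hyz' : ∀ i j, i ≠ j → (y i)⁻¹ * (z j)⁻¹ * y i * z j = 1
  hax : a⁻¹ * x⁻¹ * a * x = 1
  hay : ∀ i, a⁻¹ * (y i)⁻¹ * a * y i = (y i) ^ (1 - (k : ℤ))
  haz : ∀ i, a⁻¹ * (z i)⁻¹ * a * z i = (z i) ^ (1 - (q : ℤ))
  hbx : b⁻¹ * x⁻¹ * b * x = x ^ 2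
  hby : ∀ i, b⁻¹ * (y i)⁻¹ * b * y i = z i * y i
  hbz : ∀ i, b⁻¹ * (z i)⁻¹ * b * z i = y i * z i
  hba : b⁻¹ * a⁻¹ * b * a = a ^ 2

variable {G : Type*} [Group G] [Fintype G]

/-- The subgroup `P = ⟨x, y₁, …, y_r, z₁, …, z_r⟩` of `G`. -/
def GData.P (d : GData G) : Subgroup G :=
  Subgroup.closure (({d.x} : Set G) ∪ Set.range d.y ∪ Set.range d.z)

end Paper

open scoped commutatorElement

private lemma comm_of_rel {G : Type*} [Group G] {a b : G} (h : a⁻¹ * b⁻¹ * a * b = 1) :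
    a * b = b * a := by
  calc a * b = b * a * (a⁻¹ * b⁻¹ * a * b) := by group
  _ = b * a := by rw [h, mul_one]

private lemma conj_eq_of_comm {G : Type*} [Group G] {a b : G} (h : a * b = b * a) :
    a * b * a⁻¹ = b := by
  rw [h]; group

private lemma conj_inv_eq_of_comm {G : Type*} [Group G] {a b : G} (h : a * b = b * a) :
    a⁻¹ * b * a = b := by
  calc a⁻¹ * b * a = a⁻¹ * (b * a) := by group
  _ = a⁻¹ * (a * b) := by rw [h]
  _ = b := by group

private lemma conj_inv_form {G : Type*} [Group G] {a g w : G} (ha : a⁻¹ = a)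
    (h : a * g * a = w) : a * g⁻¹ * a = w⁻¹ := by
  have h2 : (a * g * a)⁻¹ = w⁻¹ := by rw [h]
  rw [← h2, mul_inv_rev, mul_inv_rev, ha, mul_assoc]

private lemma commutator_mem_of_comm {G : Type*} [Group G] (K : Subgroup G) {a b : G}
    (h : a * b = b * a) : ⁅a, b⁆ ∈ K := by
  have h1 : ⁅a, b⁆ = 1 := by rw [commutatorElement_def, h]; group
  rw [h1]; exact one_mem K

/-- For `H = ⟨P, b⟩`, the commutator subgroup of `H` equals
`⟨x, y₁z₁, …, y_rz_r⟩`. -/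
theorem stmt8 {G : Type*} [Group G] [Fintype G] (d : Paper.GData G)
    (H : Subgroup G) (hH : H = d.P ⊔ Subgroup.closure {d.b}) :
    ⁅H, H⁆ = Subgroup.closure (({d.x} : Set G) ∪ Set.range fun i => d.y i * d.z i) := by
  subst hH
  set K := Subgroup.closure (({d.x} : Set G) ∪ Set.range fun i => d.y i * d.z i) with hKdef
  have hPdef : d.P = Subgroup.closure (({d.x} : Set G) ∪ Set.range d.y ∪ Set.range d.z) := rfl
  have hHs : d.P ⊔ Subgroup.closure {d.b}
      = Subgroup.closure ((({d.x} : Set G) ∪ Set.range d.y ∪ Set.range d.z) ∪ {d.b}) := by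
    rw [hPdef, ← Subgroup.closure_union]
  rw [hHs]
  -- commuting relations
  have cxy : ∀ i, d.x * d.y i = d.y i * d.x := fun i => comm_of_rel (d.hxy i)
  have cxz : ∀ i, d.x * d.z i = d.z i * d.x := fun i => comm_of_rel (d.hxz i)
  have cyy : ∀ i j, d.y i * d.y j = d.y j * d.y i := fun i j => comm_of_rel (d.hyy i j)
  have czz : ∀ i j, d.z i * d.z j = d.z j * d.z i := fun i j => comm_of_rel (d.hzz i j)
  have cyz : ∀ i j, i ≠ j → d.y i * d.z j = d.z j * d.y i :=
    fun i j hij => comm_of_rel (d.hyz' i j hij)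
  -- the key y-z relation
  have hyzx : ∀ i, d.y i * d.z i = d.z i * d.y i * d.x := fun i => by
    calc d.y i * d.z i
        = d.z i * d.y i * ((d.y i)⁻¹ * (d.z i)⁻¹ * d.y i * d.z i) := by group
    _ = d.z i * d.y i * d.x := by rw [d.hyz i]
  have E1 : ∀ i, (d.z i)⁻¹ * d.y i * d.z i = d.y i * d.x := fun i => by
    calc (d.z i)⁻¹ * d.y i * d.z i
        = d.y i * ((d.y i)⁻¹ * (d.z i)⁻¹ * d.y i * d.z i) := by group
    _ = d.y i * d.x := by rw [d.hyz i]
  have F1 : ∀ i, d.y i * d.z i * (d.y i)⁻¹ = d.z i * d.x := fun i => by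
    rw [hyzx i]
    calc d.z i * d.y i * d.x * (d.y i)⁻¹
        = d.z i * (d.y i * d.x * (d.y i)⁻¹) := by group
    _ = d.z i * d.x := by rw [conj_eq_of_comm (cxy i).symm]
  -- b facts
  have hbb : d.b * d.b = 1 := by have h := d.hb2; rwa [pow_two] at h
  have hbinv : d.b⁻¹ = d.b := inv_eq_iff_mul_eq_one.mpr hbb
  have bxinv : d.b * d.x⁻¹ * d.b = d.x := by
    have h := d.hbx
    rw [hbinv, pow_two] at h
    exact mul_right_cancel h
  have bxb : d.b * d.x * d.b = d.x⁻¹ := by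
    have h := conj_inv_form hbinv bxinv
    rwa [inv_inv] at h
  have h1 : ∀ i, d.b * (d.y i)⁻¹ * d.b = d.z i := fun i => by
    have h := d.hby i
    rw [hbinv] at h
    exact mul_right_cancel h
  have h2 : ∀ i, d.b * (d.z i)⁻¹ * d.b = d.y i := fun i => by
    have h := d.hbz i
    rw [hbinv] at h
    exact mul_right_cancel h
  have byb : ∀ i, d.b * d.y i * d.b = (d.z i)⁻¹ := fun i => by
    have h := conj_inv_form hbinv (h1 i)
    rwa [inv_inv] at h
  have bzb : ∀ i, d.b * d.z i * d.b = (d.y i)⁻¹ := fun i => by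
    have h := conj_inv_form hbinv (h2 i)
    rwa [inv_inv] at h
  have bmul : ∀ g h : G, d.b * (g * h) * d.b = (d.b * g * d.b) * (d.b * h * d.b) :=
    fun g h => by
    have e : (d.b * g * d.b) * (d.b * h * d.b) = d.b * g * (d.b * d.b) * h * d.b := by group
    rw [e, hbb]; group
  have BW : ∀ i, d.b * (d.y i * d.z i) * d.b = (d.y i * d.z i)⁻¹ := fun i => by
    rw [bmul, byb i, bzb i]; group
  -- conjugation identities for the generators of K
  have cxw : ∀ i, d.x * (d.y i * d.z i) = (d.y i * d.z i) * d.x := fun i => by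
    rw [← mul_assoc, cxy i, mul_assoc, cxz i, ← mul_assoc]
  have cyw : ∀ i j, i ≠ j → d.y j * (d.y i * d.z i) = (d.y i * d.z i) * d.y j :=
    fun i j hij => by
    rw [← mul_assoc, cyy j i, mul_assoc, cyz j i (Ne.symm hij), ← mul_assoc]
  have czw : ∀ i j, i ≠ j → d.z j * (d.y i * d.z i) = (d.y i * d.z i) * d.z j :=
    fun i j hij => by
    rw [← mul_assoc, (cyz i j hij).symm, mul_assoc, czz j i, ← mul_assoc]
  have YJ1 : ∀ j, d.y j * (d.y j * d.z j) * (d.y j)⁻¹ = d.y j * d.z j * d.x := fun j => by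
    calc d.y j * (d.y j * d.z j) * (d.y j)⁻¹
        = d.y j * (d.y j * d.z j * (d.y j)⁻¹) := by group
    _ = d.y j * (d.z j * d.x) := by rw [F1 j]
    _ = d.y j * d.z j * d.x := by group
  have YJ2 : ∀ j, (d.y j)⁻¹ * (d.y j * d.z j) * d.y j = d.y j * d.z j * d.x⁻¹ := fun j => by
    calc (d.y j)⁻¹ * (d.y j * d.z j) * d.y j = d.z j * d.y j := by group
    _ = d.y j * d.z j * d.x⁻¹ := by rw [hyzx j]; group
  have ZJ1 : ∀ j, d.z j * (d.y j * d.z j) * (d.z j)⁻¹ = d.y j * d.z j * d.x⁻¹ := fun j => by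
    calc d.z j * (d.y j * d.z j) * (d.z j)⁻¹ = d.z j * d.y j := by group
    _ = d.y j * d.z j * d.x⁻¹ := by rw [hyzx j]; group
  have ZJ2 : ∀ j, (d.z j)⁻¹ * (d.y j * d.z j) * d.z j = d.y j * d.z j * d.x := fun j => by
    calc (d.z j)⁻¹ * (d.y j * d.z j) * d.z j
        = ((d.z j)⁻¹ * d.y j * d.z j) * d.z j := by group
    _ = d.y j * d.x * d.z j := by rw [E1 j]
    _ = d.y j * d.z j * d.x := by rw [mul_assoc, cxz j, ← mul_assoc]
  -- memberships in K
  have hxK : d.x ∈ K := by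
    rw [hKdef]; exact Subgroup.subset_closure (Set.mem_union_left _ rfl)
  have hwK : ∀ i, d.y i * d.z i ∈ K := fun i => by
    rw [hKdef]; exact Subgroup.subset_closure (Set.mem_union_right _ ⟨i, rfl⟩)
  have hzyK : ∀ i, d.z i * d.y i ∈ K := fun i => by
    rw [show d.z i * d.y i = (d.y i * d.z i) * d.x⁻¹ from by rw [hyzx i]; group]
    exact mul_mem (hwK i) (inv_mem hxK)
  -- the conjugation-stability "key" lemmas
  have key : ∀ s : G, s * d.x * s⁻¹ ∈ K → (∀ i, s * (d.y i * d.z i) * s⁻¹ ∈ K) →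
      ∀ u ∈ K, s * u * s⁻¹ ∈ K := by
    intro s hs1 hs2 u hu
    have hle : K ≤ Subgroup.comap (MulAut.conj s).toMonoidHom K := by
      rw [hKdef]
      apply (Subgroup.closure_le _).2
      rintro t (rfl | ⟨i, rfl⟩)
      · simpa [Subgroup.mem_comap, MulAut.conj_apply, hKdef] using hs1
      · simpa [Subgroup.mem_comap, MulAut.conj_apply, hKdef] using hs2 i
    simpa [Subgroup.mem_comap, MulAut.conj_apply] using hle hu
  have key' : ∀ s : G, s⁻¹ * d.x * s ∈ K → (∀ i, s⁻¹ * (d.y i * d.z i) * s ∈ K) →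
      ∀ u ∈ K, s⁻¹ * u * s ∈ K := by
    intro s hs1 hs2 u hu
    have h := key s⁻¹ (by rwa [inv_inv]) (fun i => by rw [inv_inv]; exact hs2 i) u hu
    rwa [inv_inv] at h
  -- stability of K under conjugation by elements of H
  have stab : ∀ g ∈ Subgroup.closure ((({d.x} : Set G) ∪ Set.range d.y ∪ Set.range d.z) ∪ {d.b}),
      (∀ u ∈ K, g * u * g⁻¹ ∈ K) ∧ (∀ u ∈ K, g⁻¹ * u * g ∈ K) := by
    intro g hg
    induction hg using Subgroup.closure_induction with
    | mem s hs =>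
      obtain ((rfl | ⟨j, rfl⟩) | ⟨j, rfl⟩) | rfl := hs
      · refine ⟨key _ ?_ (fun i => ?_), key' _ ?_ (fun i => ?_)⟩
        · rw [show d.x * d.x * d.x⁻¹ = d.x from by group]; exact hxK
        · rw [conj_eq_of_comm (cxw i)]; exact hwK i
        · rw [show d.x⁻¹ * d.x * d.x = d.x from by group]; exact hxK
        · rw [conj_inv_eq_of_comm (cxw i)]; exact hwK i
      · refine ⟨key _ ?_ (fun i => ?_), key' _ ?_ (fun i => ?_)⟩
        · rw [conj_eq_of_comm (cxy j).symm]; exact hxK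
        · by_cases hij : i = j
          · subst hij; rw [YJ1 i]; exact mul_mem (hwK i) hxK
          · rw [conj_eq_of_comm (cyw i j hij)]; exact hwK i
        · rw [conj_inv_eq_of_comm (cxy j).symm]; exact hxK
        · by_cases hij : i = j
          · subst hij; rw [YJ2 i]; exact mul_mem (hwK i) (inv_mem hxK)
          · rw [conj_inv_eq_of_comm (cyw i j hij)]; exact hwK i
      · refine ⟨key _ ?_ (fun i => ?_), key' _ ?_ (fun i => ?_)⟩
        · rw [conj_eq_of_comm (cxz j).symm]; exact hxK
        · by_cases hij : i = j
          · subst hij; rw [ZJ1 i]; exact mul_mem (hwK i) (inv_mem hxK)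
          · rw [conj_eq_of_comm (czw i j hij)]; exact hwK i
        · rw [conj_inv_eq_of_comm (cxz j).symm]; exact hxK
        · by_cases hij : i = j
          · subst hij; rw [ZJ2 i]; exact mul_mem (hwK i) hxK
          · rw [conj_inv_eq_of_comm (czw i j hij)]; exact hwK i
      · refine ⟨key _ ?_ (fun i => ?_), key' _ ?_ (fun i => ?_)⟩
        · rw [hbinv, bxb]; exact inv_mem hxK
        · rw [hbinv, BW i]; exact inv_mem (hwK i)
        · rw [hbinv, bxb]; exact inv_mem hxK
        · rw [hbinv, BW i]; exact inv_mem (hwK i)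
    | one =>
      exact ⟨fun u hu => by simpa using hu, fun u hu => by simpa using hu⟩
    | mul g1 g2 hg1 hg2 ih1 ih2 =>
      refine ⟨fun u hu => ?_, fun u hu => ?_⟩
      · rw [show g1 * g2 * u * (g1 * g2)⁻¹ = g1 * (g2 * u * g2⁻¹) * g1⁻¹ from by group]
        exact ih1.1 _ (ih2.1 u hu)
      · rw [show (g1 * g2)⁻¹ * u * (g1 * g2) = g2⁻¹ * (g1⁻¹ * u * g1) * g2 from by group]
        exact ih2.2 _ (ih1.2 u hu)
    | inv g hg ih =>
      refine ⟨fun u hu => ?_, fun u hu => ?_⟩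
      · rw [show g⁻¹ * u * (g⁻¹)⁻¹ = g⁻¹ * u * g from by rw [inv_inv]]
        exact ih.2 u hu
      · rw [show (g⁻¹)⁻¹ * u * g⁻¹ = g * u * g⁻¹ from by rw [inv_inv]]
        exact ih.1 u hu
  -- the commutator values
  have T1 : ∀ i, ⁅d.y i, d.z i⁆ = d.x := fun i => by
    rw [commutatorElement_def]
    calc d.y i * d.z i * (d.y i)⁻¹ * (d.z i)⁻¹
        = (d.y i * d.z i * (d.y i)⁻¹) * (d.z i)⁻¹ := by group
    _ = d.z i * d.x * (d.z i)⁻¹ := by rw [F1 i]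
    _ = d.x := conj_eq_of_comm (cxz i).symm
  have T5 : ∀ i, ⁅d.y i, d.b⁆ = d.y i * d.z i := fun i => by
    rw [commutatorElement_def, hbinv]
    calc d.y i * d.b * (d.y i)⁻¹ * d.b
        = d.y i * (d.b * (d.y i)⁻¹ * d.b) := by group
    _ = d.y i * d.z i := by rw [h1 i]
  have T6 : ∀ i, ⁅d.z i, d.b⁆ = d.z i * d.y i := fun i => by
    rw [commutatorElement_def, hbinv]
    calc d.z i * d.b * (d.z i)⁻¹ * d.b
        = d.z i * (d.b * (d.z i)⁻¹ * d.b) := by group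
    _ = d.z i * d.y i := by rw [h2 i]
  have T4 : ⁅d.b, d.x⁆ = d.x⁻¹ * d.x⁻¹ := by
    rw [commutatorElement_def, hbinv, bxb]
  -- the table of commutators of generators
  have table : ∀ s ∈ ((({d.x} : Set G) ∪ Set.range d.y ∪ Set.range d.z) ∪ {d.b}),
      ∀ t ∈ ((({d.x} : Set G) ∪ Set.range d.y ∪ Set.range d.z) ∪ {d.b}),
      ⁅s, t⁆ ∈ K := by
    rintro s (((rfl | ⟨i, rfl⟩) | ⟨i, rfl⟩) | rfl) t (((rfl | ⟨j, rfl⟩) | ⟨j, rfl⟩) | rfl)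
    · exact commutator_mem_of_comm K rfl
    · exact commutator_mem_of_comm K (cxy j)
    · exact commutator_mem_of_comm K (cxz j)
    · rw [← commutatorElement_inv, T4]
      exact inv_mem (mul_mem (inv_mem hxK) (inv_mem hxK))
    · exact commutator_mem_of_comm K (cxy i).symm
    · exact commutator_mem_of_comm K (cyy i j)
    · by_cases hij : i = j
      · subst hij; rw [T1 i]; exact hxK
      · exact commutator_mem_of_comm K (cyz i j hij)
    · rw [T5 i]; exact hwK i
    · exact commutator_mem_of_comm K (cxz i).symm
    · by_cases hij : j = i
      · subst hij; rw [← commutatorElement_inv, T1 j]; exact inv_mem hxK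
      · exact commutator_mem_of_comm K (cyz j i hij).symm
    · exact commutator_mem_of_comm K (czz i j)
    · rw [T6 i]; exact hzyK i
    · rw [T4]; exact mul_mem (inv_mem hxK) (inv_mem hxK)
    · rw [← commutatorElement_inv, T5 j]; exact inv_mem (hwK j)
    · rw [← commutatorElement_inv, T6 j]; exact inv_mem (hzyK j)
    · exact commutator_mem_of_comm K rfl
  -- step 1: commutators of a generator with any element of H
  have step1 : ∀ s ∈ ((({d.x} : Set G) ∪ Set.range d.y ∪ Set.range d.z) ∪ {d.b}),
      ∀ h ∈ Subgroup.closure ((({d.x} : Set G) ∪ Set.range d.y ∪ Set.range d.z) ∪ {d.b}),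
      ⁅s, h⁆ ∈ K := by
    intro s hs h hh
    induction hh using Subgroup.closure_induction with
    | mem t ht => exact table s hs t ht
    | one =>
      rw [show ⁅s, (1 : G)⁆ = 1 from by rw [commutatorElement_def]; group]
      exact one_mem K
    | mul h1' h2' hm1 hm2 ih1 ih2 =>
      rw [show ⁅s, h1' * h2'⁆ = ⁅s, h1'⁆ * (h1' * ⁅s, h2'⁆ * h1'⁻¹) from by
        simp only [commutatorElement_def]; group]
      exact mul_mem ih1 ((stab h1' hm1).1 _ ih2)
    | inv h' hm ih =>
      rw [show ⁅s, h'⁻¹⁆ = h'⁻¹ * ⁅s, h'⁆⁻¹ * h' from by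
        simp only [commutatorElement_def]; group]
      exact (stab h' hm).2 _ (inv_mem ih)
  -- step 2: all commutators
  have step2 : ∀ g ∈ Subgroup.closure ((({d.x} : Set G) ∪ Set.range d.y ∪ Set.range d.z) ∪ {d.b}),
      ∀ h ∈ Subgroup.closure ((({d.x} : Set G) ∪ Set.range d.y ∪ Set.range d.z) ∪ {d.b}),
      ⁅g, h⁆ ∈ K := by
    intro g hg
    induction hg using Subgroup.closure_induction with
    | mem s hs => exact step1 s hs
    | one =>
      intro h hh
      rw [show ⁅(1 : G), h⁆ = 1 from by rw [commutatorElement_def]; group]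
      exact one_mem K
    | mul g1 g2 hg1 hg2 ih1 ih2 =>
      intro h hh
      rw [show ⁅g1 * g2, h⁆ = (g1 * ⁅g2, h⁆ * g1⁻¹) * ⁅g1, h⁆ from by
        simp only [commutatorElement_def]; group]
      exact mul_mem ((stab g1 hg1).1 _ (ih2 h hh)) (ih1 h hh)
    | inv g' hg' ih =>
      intro h hh
      rw [show ⁅g'⁻¹, h⁆ = g'⁻¹ * ⁅g', h⁆⁻¹ * g' from by
        simp only [commutatorElement_def]; group]
      exact (stab g' hg').2 _ (inv_mem (ih h hh))
  -- memberships in H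
  have hyH : ∀ i, d.y i ∈ Subgroup.closure
      ((({d.x} : Set G) ∪ Set.range d.y ∪ Set.range d.z) ∪ {d.b}) := fun i =>
    Subgroup.subset_closure
      (Set.mem_union_left _ (Set.mem_union_left _ (Set.mem_union_right _ ⟨i, rfl⟩)))
  have hzH : ∀ i, d.z i ∈ Subgroup.closure
      ((({d.x} : Set G) ∪ Set.range d.y ∪ Set.range d.z) ∪ {d.b}) := fun i =>
    Subgroup.subset_closure (Set.mem_union_left _ (Set.mem_union_right _ ⟨i, rfl⟩))
  have hbH : d.b ∈ Subgroup.closure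
      ((({d.x} : Set G) ∪ Set.range d.y ∪ Set.range d.z) ∪ {d.b}) :=
    Subgroup.subset_closure (Set.mem_union_right _ rfl)
  apply le_antisymm
  · exact Subgroup.commutator_le.2 step2
  · rw [hKdef]
    apply (Subgroup.closure_le _).2
    rintro t (rfl | ⟨i, rfl⟩)
    · have i0 : Fin d.r := ⟨0, d.hr⟩
      have hmem := Subgroup.commutator_mem_commutator (hyH i0) (hzH i0)
      rwa [T1 i0] at hmem
    · have hmem := Subgroup.commutator_mem_commutator (hyH i) hbH
      rwa [T5 i] at hmem
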